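/- Let G = (V,E) be a finite simple graph and let W ⊆ V be a clique of G with |W| ≥ 2. Then F_W := {x ∈ STAB(G) : x_W = 1} satisfies F_W ⊆ STAB(G|W) ⊆ STAB(G), where G|W is the clique projection of W. -/

import Mathlib

open Finset

variable {V : Type*}

/-- A stable (independent) set of a graph: pairwise non-adjacent vertices. -/
def IsStable (G : SimpleGraph V) (S : Finset V) : Prop :=
  ∀ u ∈ S, ∀ v ∈ S, ¬ G.Adj u v

/-- The characteristic vectors of stable sets of `G`. -/
def stableVecs [DecidableEq V] (G : SimpleGraph V) : Set (V → ℝ) :=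
  {x | ∃ S : Finset V, IsStable G S ∧ x = fun v => if v ∈ S then (1 : ℝ) else 0}

/-- The stable set polytope `STAB(G)`. -/
def STAB [DecidableEq V] (G : SimpleGraph V) : Set (V → ℝ) :=
  convexHull ℝ (stableVecs G)

/-- `x_W = ∑_{v ∈ W} x_v`. -/
def vsum (W : Finset V) (x : V → ℝ) : ℝ := ∑ v ∈ W, x v

/-- The clique projection `G|W`: add every non-edge `uv` with `W ⊆ N(u) ∪ N(v)`. -/
def cliqueProj (G : SimpleGraph V) (W : Finset V) : SimpleGraph V where
  Adj u v := G.Adj u v ∨ (u ≠ v ∧ ¬G.Adj u v ∧ ∀ w ∈ W, G.Adj w u ∨ G.Adj w v)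
  symm := by
    constructor
    rintro u v (h | ⟨hne, hna, h⟩)
    · exact Or.inl h.symm
    · exact Or.inr ⟨hne.symm, fun h' => hna h'.symm, fun w hw => (h w hw).symm⟩
  loopless := by
    constructor
    rintro u (h | ⟨hne, _, _⟩)
    · exact (G.ne_of_adj h) rfl
    · exact hne rfl

/-- Iterated projected graphs: `G_0 = G`, `G_t = G_{t-1} | W_t`. -/
def projSeq (G : SimpleGraph V) (W : ℕ → Finset V) : ℕ → SimpleGraph V
  | 0 => G
  | t + 1 => cliqueProj (projSeq G W t) (W (t + 1))

/-- `F_t = {x ∈ STAB(G) : x_{W_j} = 1, j = 1, …, t}`. -/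
def Fface [DecidableEq V] (G : SimpleGraph V) (W : ℕ → Finset V) (t : ℕ) : Set (V → ℝ) :=
  {x ∈ STAB G | ∀ j ∈ Finset.Icc 1 t, vsum (W j) x = 1}

/-- `α(G[H], c)`: the maximum `c`-weight of a stable set of `G` contained in `H`. -/
noncomputable def alphaW (G : SimpleGraph V) (H : Finset V) (c : V → ℝ) : ℝ :=
  sSup {r : ℝ | ∃ S : Finset V, S ⊆ H ∧ IsStable G S ∧ r = ∑ v ∈ S, c v}

/-- `α(G[H])`: the maximum cardinality of a stable set of `G` contained in `H`. -/
noncomputable def alphaOn (G : SimpleGraph V) (H : Finset V) : ℕ :=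
  sSup {k : ℕ | ∃ S : Finset V, S ⊆ H ∧ IsStable G S ∧ S.card = k}

/-- The stability number `α(G)`. -/
noncomputable def alphaNum [Fintype V] (G : SimpleGraph V) : ℕ :=
  sSup {k : ℕ | ∃ S : Finset V, IsStable G S ∧ S.card = k}

/-- `cᵀx`. -/
def dotp [Fintype V] (c x : V → ℝ) : ℝ := ∑ v, c v * x v

/-- The affine dimension of a set of points. -/
noncomputable def affDim (s : Set (V → ℝ)) : ℕ := Module.finrank ℝ (vectorSpan ℝ s)

/-- Strong hypertree (with hyperedges of size `k`). -/
inductive IsStrongHypertree [DecidableEq V] (k : ℕ) : Finset V → Finset (Finset V) → Prop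
  | base (V' : Finset V) : IsStrongHypertree k V' {V'}
  | step (V' : Finset V) (E : Finset (Finset V)) (v : V) (Wi : Finset V) :
      v ∈ V' → v ∈ Wi → Wi ∈ E →
      (∃ Wj ∈ E, Wj ≠ Wi ∧ (Wi ∩ Wj).card = k - 1) →
      IsStrongHypertree k (V'.erase v) (E.erase Wi) →
      IsStrongHypertree k V' E

/-- Condition (I): `|W_t| = k` and the subgraph of `G_{t-1}` induced by `W_1 ∪ ⋯ ∪ W_t`
is `k`-partite with stable vertex classes `V_t^1, …, V_t^k`. -/
def CondI [DecidableEq V] (G : SimpleGraph V) (W : ℕ → Finset V)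
    (Vc : ℕ → ℕ → Finset V) (k t : ℕ) : Prop :=
  (W t).card = k ∧
  (Finset.Icc 1 k).biUnion (Vc t) = (Finset.Icc 1 t).biUnion W ∧
  (∀ i ∈ Finset.Icc 1 k, ∀ j ∈ Finset.Icc 1 k, i ≠ j → Disjoint (Vc t i) (Vc t j)) ∧
  (∀ i ∈ Finset.Icc 1 k, ∀ u ∈ Vc t i, ∀ v ∈ Vc t i, ¬(projSeq G W (t - 1)).Adj u v)

/-- Condition (II): `T_t = (V_t, {W_1, …, W_t})` is a strong hypertree. -/
def CondII [DecidableEq V] (W : ℕ → Finset V) (Vc : ℕ → ℕ → Finset V) (k t : ℕ) : Prop :=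
  IsStrongHypertree k ((Finset.Icc 1 k).biUnion (Vc t)) ((Finset.Icc 1 t).image W)

/-- Condition (III): every `w ∉ V_t` misses some class `V_t^i` in `G_{t-1}`. -/
def CondIII [DecidableEq V] (G : SimpleGraph V) (W : ℕ → Finset V)
    (Vc : ℕ → ℕ → Finset V) (k t : ℕ) : Prop :=
  ∀ w : V, w ∉ (Finset.Icc 1 k).biUnion (Vc t) →
    ∃ i ∈ Finset.Icc 1 k, ∀ u ∈ Vc t i, ¬(projSeq G W (t - 1)).Adj w u

/-- Condition (IV). -/
def CondIV [Fintype V] [DecidableEq V] (G : SimpleGraph V) (W : ℕ → Finset V)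
    (Vc : ℕ → ℕ → Finset V) (k r : ℕ) : Prop :=
  ∀ i ∈ Finset.Icc 1 (k - 1), ∀ t ∈ Finset.Icc 1 r, ∀ v ∈ W t ∩ Vc t i,
    ∀ w ∈ Finset.univ \ (Finset.Icc 1 k).biUnion (Vc r),
      (∃ z ∈ Vc r i, (projSeq G W r).Adj z w) →
      (G.Adj v w ∨ ∃ t' ∈ Finset.Icc 1 r,
        (projSeq G W (t' - 1)).IsClique (W t : Set V) ∧
        W t ≠ W t' ∧ (W t ∩ W t').card = k - 1 ∧
        v ∉ W t' ∧ ∃ v' ∈ W t' ∩ Vc r i, (projSeq G W (t' - 1)).Adj v' w)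

/-- Condition (V): no vertex of `V_t^k` has a neighbor in `V_r^0` in the graph `G_r`. -/
def CondV [Fintype V] [DecidableEq V] (G : SimpleGraph V) (W : ℕ → Finset V)
    (Vc : ℕ → ℕ → Finset V) (k r t : ℕ) : Prop :=
  ∀ v ∈ Vc t k, ∀ w ∈ Finset.univ \ (Finset.Icc 1 k).biUnion (Vc r),
    ¬(projSeq G W r).Adj v w

/-- `STAB(G[H])`, embedded in `ℝ^V` (coordinates outside `H` are zero). -/
def STABon [DecidableEq V] (G : SimpleGraph V) (H : Finset V) : Set (V → ℝ) :=
  convexHull ℝ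
    {x | ∃ S : Finset V, S ⊆ H ∧ IsStable G S ∧ x = fun v => if v ∈ S then (1 : ℝ) else 0}

lemma vsum_char [DecidableEq V] (W S : Finset V) :
    vsum W (fun v => if v ∈ S then (1 : ℝ) else 0) = (W ∩ S).card := by
  simp [vsum, Finset.sum_ite_mem]

lemma card_inter_le_one [DecidableEq V] {G : SimpleGraph V} {W S : Finset V}
    (hW : G.IsClique (W : Set V)) (hS : IsStable G S) : (W ∩ S).card ≤ 1 := by
  refine Finset.card_le_one.2 fun a ha b hb => ?_
  simp only [Finset.mem_inter] at ha hb
  by_contra hne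
  exact hS a ha.2 b hb.2 (hW ha.1 hb.1 hne)

lemma stable_proj [DecidableEq V] {G : SimpleGraph V} {W S : Finset V}
    (hW : G.IsClique (W : Set V)) (hS : IsStable G S) (h1 : (W ∩ S).card = 1) :
    IsStable (cliqueProj G W) S := by
  obtain ⟨w, hw⟩ := Finset.card_eq_one.1 h1
  have hwW : w ∈ W := by have := hw ▸ Finset.mem_singleton_self w; exact (Finset.mem_inter.1 this).1
  have hwS : w ∈ S := by have := hw ▸ Finset.mem_singleton_self w; exact (Finset.mem_inter.1 this).2
  rintro u hu v hv (h | ⟨hne, hna, h⟩)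
  · exact hS u hu v hv h
  · rcases h w hwW with h' | h'
    · exact hS w hwS u hu h'
    · exact hS w hwS v hv h'

/-- For a clique `W` of `G` with `|W| ≥ 2`,
`F_W = {x ∈ STAB(G) : x_W = 1} ⊆ STAB(G|W) ⊆ STAB(G)`. -/
theorem stmt0 {V : Type*} [Fintype V] [DecidableEq V] (G : SimpleGraph V)
    (W : Finset V) (hW : G.IsClique (W : Set V)) (hcard : 2 ≤ W.card) :
    {x ∈ STAB G | vsum W x = 1} ⊆ STAB (cliqueProj G W) ∧
      STAB (cliqueProj G W) ⊆ STAB G := by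
  constructor
  · rintro x ⟨hx, hxW⟩
    rw [STAB, _root_.convexHull_eq] at hx
    obtain ⟨ι, t, w, z, hw0, hw1, hz, hcm⟩ := hx
    -- each z i is a stable set vector with vsum ≤ 1
    have hle : ∀ i ∈ t, vsum W (z i) ≤ 1 := by
      intro i hi
      obtain ⟨S, hSst, hSeq⟩ := hz i hi
      rw [hSeq, vsum_char]
      exact_mod_cast card_inter_le_one hW hSst
    have hxval : x = fun v => ∑ i ∈ t, w i * z i v := by
      rw [← hcm, Finset.centerMass, hw1, inv_one, one_smul]
      funext v
      simp [Finset.sum_apply]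
    have hsum : ∑ i ∈ t, w i * vsum W (z i) = 1 := by
      rw [← hxW, hxval]
      simp only [vsum]
      rw [Finset.sum_comm]
      exact Finset.sum_congr rfl fun i _ => Finset.mul_sum _ _ _
    -- indices with positive weight have vsum = 1
    have hkey : ∀ i ∈ t, w i ≠ 0 → vsum W (z i) = 1 := by
      intro i hi hwi
      by_contra hne
      have hlt : w i * vsum W (z i) < w i * 1 :=
        mul_lt_mul_of_pos_left (lt_of_le_of_ne (hle i hi) hne)
          (lt_of_le_of_ne (hw0 i hi) (Ne.symm hwi))
      have hsum2 : ∑ j ∈ t, w j * vsum W (z j) < ∑ j ∈ t, w j * 1 :=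
        Finset.sum_lt_sum (fun j hj => mul_le_mul_of_nonneg_left (hle j hj) (hw0 j hj))
          ⟨i, hi, hlt⟩
      rw [hsum] at hsum2
      simp only [mul_one] at hsum2
      rw [hw1] at hsum2
      exact lt_irrefl 1 hsum2
    -- restrict to positive weights
    set t' := t.filter (fun i => w i ≠ 0) with ht'
    have hsum' : ∑ i ∈ t', w i = 1 := by
      rw [← hw1, ht']
      exact Finset.sum_filter_ne_zero t
    have hmem : ∀ i ∈ t', z i ∈ stableVecs (cliqueProj G W) := by
      intro i hi
      rw [ht', Finset.mem_filter] at hi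
      obtain ⟨S, hSst, hSeq⟩ := hz i hi.1
      have h1 : ((W ∩ S).card : ℝ) = 1 := by
        rw [← vsum_char W S, ← hSeq]; exact hkey i hi.1 hi.2
      exact ⟨S, stable_proj hW hSst (by exact_mod_cast h1), hSeq⟩
    have hxval' : x = t'.centerMass w z := by
      rw [Finset.centerMass, hsum', inv_one, one_smul, hxval]
      funext v
      rw [Finset.sum_apply]
      simp only [Pi.smul_apply, smul_eq_mul]
      rw [ht']
      refine (Finset.sum_filter_of_ne fun i _ h => ?_).symm
      intro h0; rw [h0] at h; simp at h
    rw [hxval']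
    exact Finset.centerMass_mem_convexHull _ (fun i hi => hw0 i (Finset.mem_filter.1 hi).1)
      (by rw [hsum']; norm_num) hmem
  · apply convexHull_mono
    rintro x ⟨S, hSst, hSeq⟩
    exact ⟨S, fun u hu v hv h => hSst u hu v hv (Or.inl h), hSeq⟩
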